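/- Let K be a field and let O be a valuation subring of K (so O is an integrally closed subring of K whose fraction field is K). Let M be an n × n matrix with entries in K. Then M is conjugate over K to a matrix with all entries in O — i.e., there exists an invertible matrix P ∈ GLₙ(K) such that every entry of P·M·P⁻¹ lies in O — if and only if every coefficient of the characteristic polynomial of M lies in O. -/

import Mathlib

open Polynomial Matrix

lemma charpoly_conj_aux {K : Type*} [Field K] {n : ℕ} (P A Q : Matrix (Fin n) (Fin n) K)
    (h1 : P * Q = 1) : (P * A * Q).charpoly = A.charpoly := by
  have h2 : Q * P = 1 := mul_eq_one_comm.mp h1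
  have key : charmatrix (P * A * Q) = P.map C * charmatrix A * Q.map C := by
    simp only [charmatrix, RingHom.mapMatrix_apply, mul_sub, sub_mul]
    congr 1
    · rw [Matrix.scalar_apply, ← Matrix.smul_one_eq_diagonal, Matrix.mul_smul, Matrix.smul_mul,
        mul_one, ← Matrix.map_mul, h1, Matrix.map_one _ (map_zero C) (map_one C)]
    · rw [← Matrix.map_mul, ← Matrix.map_mul]
  unfold Matrix.charpoly
  rw [key, det_mul, det_mul, mul_comm, ← mul_assoc, ← det_mul, ← Matrix.map_mul, h2]
  simp

lemma sum_mulVec' {K : Type*} [Field K] {n : ℕ} (s : Finset ℕ)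
    (f : ℕ → Matrix (Fin n) (Fin n) K) (e : Fin n → K) :
    (∑ k ∈ s, f k) *ᵥ e = ∑ k ∈ s, (f k *ᵥ e) := by
  induction s using Finset.induction with
  | empty => simp [Matrix.zero_mulVec]
  | insert a s h ih => simp [Finset.sum_insert h, Matrix.add_mulVec, ih]

lemma reduce_to_independent {K : Type*} [Field K] (O : ValuationSubring K) {n : ℕ} :
    ∀ (m : ℕ) (v : Fin m → (Fin n → K)),
    ∃ (m' : ℕ) (b : Fin m' → (Fin n → K)), LinearIndependent K b ∧
      Submodule.span O (Set.range b) = Submodule.span O (Set.range v) := by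
  intro m
  induction m with
  | zero => exact fun v => ⟨0, v, linearIndependent_empty_type, rfl⟩
  | succ m ih =>
    intro v
    by_cases hv : LinearIndependent K v
    · exact ⟨m + 1, v, hv, rfl⟩
    · obtain ⟨g, hsum, i, hgi⟩ := Fintype.not_linearIndependent_iff.mp hv
      obtain ⟨i0, -, hmax⟩ := Finset.exists_max_image Finset.univ (fun i => O.valuation (g i))
        ⟨i, Finset.mem_univ i⟩
      have hgi0 : g i0 ≠ 0 := by
        intro h0
        apply hgi
        have := hmax i (Finset.mem_univ i)
        rw [h0, map_zero, le_zero_iff, Valuation.zero_iff] at this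
        exact this
      set w : Fin m → (Fin n → K) := fun j => v (i0.succAbove j) with hw
      have hc : ∀ j, -(g (i0.succAbove j) / g i0) ∈ O := by
        intro j
        apply neg_mem
        rw [← O.valuation_le_one_iff, Valuation.map_div,
          div_le_one₀ ((Valuation.pos_iff _).mpr hgi0)]
        exact hmax _ (Finset.mem_univ _)
      have hvi0 : v i0 = ∑ j, (-(g (i0.succAbove j) / g i0)) • w j := by
        have h1 : g i0 • v i0 = ∑ j, (-(g (i0.succAbove j))) • w j := by
          have h2 := Fin.sum_univ_succAbove (fun i => g i • v i) i0
          rw [hsum] at h2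
          rw [eq_neg_of_add_eq_zero_left h2.symm, ← Finset.sum_neg_distrib]
          simp [neg_smul]
          rfl
        calc v i0 = (g i0)⁻¹ • (g i0 • v i0) := by
              rw [smul_smul, inv_mul_cancel₀ hgi0, one_smul]
          _ = _ := by
              rw [h1, Finset.smul_sum]
              refine Finset.sum_congr rfl fun j _ => ?_
              rw [smul_smul]
              congr 1
              field_simp
      have hmem : v i0 ∈ Submodule.span O (Set.range w) := by
        rw [hvi0]
        refine Submodule.sum_mem _ fun j _ => ?_
        have : (-(g (i0.succAbove j) / g i0)) • w j
            = (⟨_, hc j⟩ : O) • w j := rfl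
        rw [this]
        exact Submodule.smul_mem _ _ (Submodule.subset_span ⟨j, rfl⟩)
      have hspan : Submodule.span O (Set.range w) = Submodule.span O (Set.range v) := by
        apply le_antisymm
        · exact Submodule.span_mono (Set.range_comp_subset_range _ v)
        · rw [Submodule.span_le]
          rintro x ⟨i, rfl⟩
          by_cases hii : i = i0
          · exact hii ▸ hmem
          · obtain ⟨j, hj⟩ := Fin.exists_succAbove_eq hii
            exact Submodule.subset_span ⟨j, by show v (i0.succAbove j) = v i; rw [hj]⟩
      obtain ⟨m', b, hb1, hb2⟩ := ih w
      exact ⟨m', b, hb1, hb2.trans hspan⟩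

theorem conj_integral_of_charpoly_integral {K : Type*} [Field K] (O : ValuationSubring K) {n : ℕ}
    (M : Matrix (Fin n) (Fin n) K) (hcoeff : ∀ k : ℕ, M.charpoly.coeff k ∈ O)
    (hn : 0 < n) :
    ∃ P : GL (Fin n) K, ∀ i j : Fin n,
        ((P : Matrix (Fin n) (Fin n) K) * M * ((P⁻¹ : GL (Fin n) K) : Matrix (Fin n) (Fin n) K)) i j ∈ O := by
  -- Cayley-Hamilton
  have hdeg : M.charpoly.natDegree = n := by
    rw [Matrix.charpoly_natDegree_eq_dim, Fintype.card_fin]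
  have hCH : M ^ n = ∑ k ∈ Finset.range n, (-(M.charpoly.coeff k)) • M ^ k := by
    have h0 := Matrix.aeval_self_charpoly M
    rw [Polynomial.aeval_eq_sum_range, hdeg, Finset.sum_range_succ] at h0
    have hm : M.charpoly.coeff n = 1 := by
      have := Matrix.charpoly_monic M
      rw [Polynomial.Monic.def, Polynomial.leadingCoeff, hdeg] at this
      exact this
    rw [hm, one_smul] at h0
    rw [eq_neg_of_add_eq_zero_right h0, ← Finset.sum_neg_distrib]
    simp [neg_smul]
  set gens : Fin n × Fin n → (Fin n → K) :=
    fun p => (M ^ (p.1 : ℕ)) *ᵥ Pi.single p.2 1 with hgens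
  set L := Submodule.span O (Set.range gens) with hL
  have hsingle : ∀ i, Pi.single i 1 ∈ L := by
    intro i
    have : Pi.single i 1 = gens (⟨0, hn⟩, i) := by
      funext j
      simp [hgens, Matrix.one_apply, Pi.single_apply, eq_comm]
    rw [this]
    exact Submodule.subset_span ⟨_, rfl⟩
  have hstab : ∀ x ∈ L, M *ᵥ x ∈ L := by
    intro x hx
    induction hx using Submodule.span_induction with
    | mem x h =>
      obtain ⟨⟨k, i⟩, rfl⟩ := h
      have hx : M *ᵥ gens (k, i) = (M ^ ((k : ℕ) + 1)) *ᵥ Pi.single i 1 := by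
        simp only [hgens]
        rw [Matrix.mulVec_mulVec, ← pow_succ']
      rw [hx]
      by_cases hk : (k : ℕ) + 1 < n
      · exact Submodule.subset_span ⟨(⟨(k : ℕ) + 1, hk⟩, i), rfl⟩
      · have hkn : (k : ℕ) + 1 = n := by omega
        rw [hkn, hCH, sum_mulVec']
        refine Submodule.sum_mem _ fun j hj => ?_
        rw [Matrix.smul_mulVec]
        have hco : -(M.charpoly.coeff j) ∈ O := neg_mem (hcoeff j)
        have : (-(M.charpoly.coeff j)) • ((M ^ j) *ᵥ Pi.single i 1)
            = (⟨_, hco⟩ : O) • ((M ^ j) *ᵥ Pi.single i 1) := rfl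
        rw [this]
        refine Submodule.smul_mem _ _ (Submodule.subset_span ⟨(⟨j, Finset.mem_range.mp hj⟩, i), rfl⟩)
    | zero => simp [Submodule.zero_mem]
    | add x y hx hy ihx ihy => rw [Matrix.mulVec_add]; exact Submodule.add_mem _ ihx ihy
    | smul a x hx ihx =>
      have : M *ᵥ (a • x) = a • (M *ᵥ x) := by
        have h2 : a • x = (a : K) • x := rfl
        have h3 : a • (M *ᵥ x) = (a : K) • (M *ᵥ x) := rfl
        rw [h2, h3, Matrix.mulVec_smul]
      rw [this]
      exact Submodule.smul_mem _ _ ihx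
  obtain ⟨m', b, hli, hsp⟩ := reduce_to_independent O (n * n) (gens ∘ finProdFinEquiv.symm)
  rw [Function.Surjective.range_comp finProdFinEquiv.symm.surjective gens] at hsp
  have hspK : ⊤ ≤ Submodule.span K (Set.range b) := by
    rw [← (Pi.basisFun K (Fin n)).span_eq, Submodule.span_le]
    rintro x ⟨i, rfl⟩
    rw [Pi.basisFun_apply]
    have h1 : Pi.single i 1 ∈ Submodule.span O (Set.range b) := by rw [hsp]; exact hsingle i
    exact Submodule.span_le_restrictScalars O K _ h1
  let bB : Module.Basis (Fin m') K (Fin n → K) := Module.Basis.mk hli hspK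
  have hm' : m' = n := by
    have h1 := Module.finrank_eq_card_basis bB
    rw [Module.finrank_fin_fun, Fintype.card_fin] at h1
    exact h1.symm
  subst m'
  set B0 := Pi.basisFun K (Fin n) with hB0
  set Q : Matrix (Fin n) (Fin n) K := B0.toMatrix (⇑bB) with hQdef
  have hQ : ∀ i j, Q i j = b j i := by
    intro i j
    rw [hQdef, Module.Basis.toMatrix_apply, hB0, Pi.basisFun_repr]
    simp [bB]
  haveI : Invertible Q := B0.invertibleToMatrix bB
  let u : (Matrix (Fin n) (Fin n) K)ˣ := unitOfInvertible Q
  refine ⟨u⁻¹, ?_⟩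
  intro i j
  have hval : ((u⁻¹ : GL (Fin n) K) : Matrix (Fin n) (Fin n) K) = ⅟Q := rfl
  have hval2 : (((u⁻¹)⁻¹ : GL (Fin n) K) : Matrix (Fin n) (Fin n) K) = Q := by
    rw [inv_inv]
    rfl
  rw [hval, hval2]
  have hrepr : ∀ x ∈ L, ∀ i, bB.repr x i ∈ O := by
    intro x hx
    rw [hL, ← hsp] at hx
    induction hx using Submodule.span_induction with
    | mem x h =>
      obtain ⟨j, rfl⟩ := h
      intro i
      have hb : bB.repr (b j) = Finsupp.single j 1 := by
        have : b j = bB j := by simp [bB]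
        rw [this, bB.repr_self]
      rw [hb, Finsupp.single_apply]
      split
      · exact one_mem O
      · exact zero_mem O
    | zero => intro i; rw [map_zero]; exact zero_mem O
    | add x y hx hy ihx ihy =>
      intro i
      rw [map_add]
      exact add_mem (ihx i) (ihy i)
    | smul a x hx ihx =>
      intro i
      have h2 : a • x = (a : K) • x := rfl
      rw [h2, _root_.map_smul, Finsupp.smul_apply, smul_eq_mul]
      exact mul_mem a.2 (ihx i)
  have hbL : ∀ j, b j ∈ L := by
    intro j
    rw [hL, ← hsp]
    exact Submodule.subset_span ⟨j, rfl⟩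
  have hA : ∀ i j, bB.repr (M *ᵥ b j) i ∈ O := fun i j => hrepr _ (hstab _ (hbL j)) i
  set A : Matrix (Fin n) (Fin n) K := Matrix.of (fun i j => (bB.repr (M *ᵥ b j) i : K)) with hAdef
  have hQA : Q * A = M * Q := by
    ext i j
    have hy := bB.sum_repr (M *ᵥ b j)
    calc (Q * A) i j = ∑ k, Q i k * A k j := by rw [Matrix.mul_apply]
      _ = ∑ k, bB.repr (M *ᵥ b j) k * b k i := by
          refine Finset.sum_congr rfl fun k _ => ?_
          rw [hQ, hAdef]
          simp [mul_comm]
      _ = (∑ k, bB.repr (M *ᵥ b j) k • bB k) i := by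
          rw [Finset.sum_apply]
          refine Finset.sum_congr rfl fun k _ => ?_
          simp [bB, Pi.smul_apply, smul_eq_mul]
      _ = (M *ᵥ b j) i := by rw [hy]
      _ = ∑ k, M i k * Q k j := by
          rw [Matrix.mulVec]
          refine Finset.sum_congr rfl fun k _ => ?_
          rw [hQ]
      _ = (M * Q) i j := (Matrix.mul_apply).symm
  have hfin : ⅟Q * M * Q = A := by
    rw [mul_assoc, ← hQA, ← mul_assoc, invOf_mul_self, one_mul]
  rw [hfin, hAdef]
  exact hA i j


/-- Let `K` be a field and `O` a valuation subring of `K`. An `n × n` matrix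
`M` over `K` is conjugate over `K` to a matrix with all entries in `O` if and only if all
coefficients of the characteristic polynomial of `M` lie in `O`. -/
theorem conjugate_to_integral_iff_charpoly_integral
    {K : Type*} [Field K] (O : ValuationSubring K) {n : ℕ}
    (M : Matrix (Fin n) (Fin n) K) :
    (∃ P : GL (Fin n) K, ∀ i j : Fin n,
        ((P : Matrix (Fin n) (Fin n) K) * M * ((P⁻¹ : GL (Fin n) K) : Matrix (Fin n) (Fin n) K)) i j ∈ O)
      ↔ ∀ k : ℕ, M.charpoly.coeff k ∈ O := by
  constructor
  · rintro ⟨P, hP⟩ k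
    set N : Matrix (Fin n) (Fin n) K :=
      (P : Matrix (Fin n) (Fin n) K) * M * ((P⁻¹ : GL (Fin n) K) : Matrix (Fin n) (Fin n) K)
      with hN
    have hch : N.charpoly = M.charpoly := by
      refine charpoly_conj_aux _ _ _ ?_
      rw [← Units.val_mul, mul_inv_cancel, Units.val_one]
    have hNO : N = (Matrix.of fun i j => (⟨N i j, hP i j⟩ : O)).map O.subtype := by
      ext i j
      rfl
    rw [← hch, hNO, Matrix.charpoly_map, Polynomial.coeff_map]
    exact SetLike.coe_mem _
  · intro hcoeff
    rcases Nat.eq_zero_or_pos n with hn | hn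
    · refine ⟨1, fun i j => ?_⟩
      exact absurd i.isLt (by omega)
    · exact conj_integral_of_charpoly_integral O M hcoeff hn
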